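/- Let γ, ω > 0 with γ/ω ≤ 2/π, let μ₀, μ₁ ∈ [0, 1] with μ₁ ≤ 1 - (π/2)(γ/ω), let τ₀, τ₁ ∈ [0, π/(2ω)], set R̃⁰ = μ₀ e^{-(γ/2)τ₀}, R̃¹ = μ₁ e^{(γ/2)τ₁}, σ = sgn(μ₁ - μ₀), σ̃ = sgn(R̃¹ - R̃⁰) (each ±1). If σ = σ̃ = 1 then ln((1 - R̃⁰)/(1 - R̃¹)) - ln((1 - μ₀)/(1 - μ₁)) ≤ 3/2. -/

import Mathlib

open Real

lemma pos_of_sign_eq_one' {r : ℝ} (h : Real.sign r = 1) : 0 < r := by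
  rcases lt_trichotomy r 0 with hr | hr | hr
  · rw [Real.sign_of_neg hr] at h; norm_num at h
  · rw [hr, Real.sign_zero] at h; norm_num at h
  · exact hr

set_option maxHeartbeats 1000000 in
/-- Case 1 (σ = σ̃ = 1) of the upper time estimate: the logarithmic time
between the adjusted radii exceeds the ideal logarithmic time by at most 3/2. -/
theorem upper_estimate_case_one (γ ω μ₀ μ₁ τ₀ τ₁ R0 R1 : ℝ)
    (hγ : 0 < γ) (hω : 0 < ω) (h2π : γ / ω ≤ 2 / π)
    (hμ₀ : μ₀ ∈ Set.Icc (0:ℝ) 1) (hμ₁ : μ₁ ∈ Set.Icc (0:ℝ) 1)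
    (hμ₁' : μ₁ ≤ 1 - (π/2) * (γ/ω))
    (hτ₀ : τ₀ ∈ Set.Icc (0:ℝ) (π/(2*ω))) (hτ₁ : τ₁ ∈ Set.Icc (0:ℝ) (π/(2*ω)))
    (hR0 : R0 = μ₀ * Real.exp (-(γ/2) * τ₀))
    (hR1 : R1 = μ₁ * Real.exp ((γ/2) * τ₁))
    (hσ : Real.sign (μ₁ - μ₀) = 1)
    (hσ' : Real.sign (R1 - R0) = 1) :
    Real.log ((1 - R0) / (1 - R1)) - Real.log ((1 - μ₀) / (1 - μ₁)) ≤ 3/2 := by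
  obtain ⟨hμ₀0, hμ₀1⟩ := hμ₀
  obtain ⟨hμ₁0, hμ₁1⟩ := hμ₁
  obtain ⟨hτ₀0, hτ₀1⟩ := hτ₀
  obtain ⟨hτ₁0, hτ₁1⟩ := hτ₁
  have hμ : μ₀ < μ₁ := by linarith [pos_of_sign_eq_one' hσ]
  have hRR : R0 < R1 := by linarith [pos_of_sign_eq_one' hσ']
  have hπ : (0:ℝ) < π := Real.pi_pos
  have hgw : 0 < γ / ω := div_pos hγ hω
  -- x = (γ/2) τ₁
  set x := γ/2 * τ₁ with hxdef
  have hx0 : 0 ≤ x := by positivity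
  have hxle : 2 * x ≤ 1 - μ₁ := by
    have h1 : 2 * x ≤ γ * (π / (2*ω)) := by
      have := mul_le_mul_of_nonneg_left hτ₁1 hγ.le
      nlinarith
    have h2 : γ * (π / (2*ω)) = π/2 * (γ/ω) := by field_simp
    linarith
  have hμ₁lt : μ₁ < 1 := by nlinarith
  have hx1 : x < 1 := by linarith
  -- y = (γ/2) τ₀
  set y := γ/2 * τ₀ with hydef
  have hy0 : 0 ≤ y := by positivity
  have hyle : 2 * y ≤ 1 - μ₁ := by
    have h1 : 2 * y ≤ γ * (π / (2*ω)) := by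
      have := mul_le_mul_of_nonneg_left hτ₀1 hγ.le
      nlinarith
    have h2 : γ * (π / (2*ω)) = π/2 * (γ/ω) := by field_simp
    linarith
  -- key exponential inequality : (1-x) * exp x ≤ 1
  have hex : (1 - x) * Real.exp x ≤ 1 := by
    calc (1 - x) * Real.exp x ≤ Real.exp (-x) * Real.exp x := by
          have := Real.add_one_le_exp (-x)
          have := (Real.exp_pos x).le
          nlinarith
      _ = 1 := by rw [← Real.exp_add]; simp
  -- bound on 1 - R1
  have hR1b : 1 - μ₁ ≤ 2 * (1 - R1) := by
    rw [hR1]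
    have hE := Real.exp_pos x
    -- want : 2 μ₁ exp x ≤ 1 + μ₁
    have key : 2 * μ₁ * Real.exp x ≤ 1 + μ₁ := by
      have h1 : 2 * μ₁ * ((1-x) * Real.exp x) ≤ 2 * μ₁ * 1 := by
        apply mul_le_mul_of_nonneg_left hex (by positivity)
      have hμx : μ₁ * x ≤ 1 * x := mul_le_mul_of_nonneg_right hμ₁1 hx0
      have h2 : 2 * μ₁ ≤ (1 + μ₁) * (1 - x) := by nlinarith
      have h3 : (2 * μ₁ * Real.exp x) * (1-x) ≤ (1 + μ₁) * (1-x) := by nlinarith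
      exact le_of_mul_le_mul_right h3 (by linarith)
    linarith
  have hR1pos : 0 < 1 - R1 := by linarith
  have hR0pos : 0 < 1 - R0 := by linarith
  have hμ₀pos : 0 < 1 - μ₀ := by linarith
  have hμ₁pos : 0 < 1 - μ₁ := by linarith
  -- bound on 1 - R0
  have hR0b : 1 - R0 ≤ 3/2 * (1 - μ₀) := by
    rw [hR0]
    have h1 : -(γ/2) * τ₀ = -y := by rw [hydef]; ring
    rw [h1]
    have h2 : 1 - y ≤ Real.exp (-y) := by linarith [Real.add_one_le_exp (-y)]
    have h3 : μ₀ - y ≤ μ₀ * Real.exp (-y) := by nlinarith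
    have h4 : y ≤ (1 - μ₀) / 2 := by linarith
    linarith
  -- combine via logs
  rw [Real.log_div hR0pos.ne' hR1pos.ne', Real.log_div hμ₀pos.ne' hμ₁pos.ne']
  have A : Real.log (1 - R0) ≤ Real.log (3/2) + Real.log (1 - μ₀) := by
    rw [← Real.log_mul (by norm_num) hμ₀pos.ne']
    exact Real.log_le_log hR0pos (by linarith)
  have B : Real.log (1 - μ₁) ≤ Real.log 2 + Real.log (1 - R1) := by
    rw [← Real.log_mul (by norm_num) hR1pos.ne']
    exact Real.log_le_log hμ₁pos (by linarith)
  have C : Real.log (3/2) + Real.log 2 = Real.log 3 := by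
    rw [← Real.log_mul (by norm_num) (by norm_num)]; norm_num
  have D : Real.log 3 ≤ 3/2 := by
    rw [Real.log_le_iff_le_exp (by norm_num)]
    have h34 : (7/4:ℝ) ≤ Real.exp (3/4) := by linarith [Real.add_one_le_exp (3/4:ℝ)]
    have : Real.exp (3/2 : ℝ) = Real.exp (3/4) * Real.exp (3/4) := by
      rw [← Real.exp_add]; norm_num
    nlinarith [Real.exp_pos (3/4:ℝ)]
  linarith
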